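/- The equal-wealth parimutuel price rule satisfies Recursive Invariance: if ρ is the equilibrium price for beliefs (p_1,…,p_n) and q_i = λ_i p_i + (1−λ_i)ρ with λ_i ∈ [0,1] for each i, then ρ is also the equilibrium price for beliefs (q_1,…,q_n), supported by the same allocation. -/
import Mathlib


/-- the equal-wealth parimutuel price rule satisfies Recursive
Invariance: if `ρ` is an equilibrium price for beliefs `p`, witnessed by an
allocation `x` and multipliers `α`, then for beliefs
`q i = λ i • p i + (1 − λ i) • ρ` the same `ρ` is an equilibrium price,
supported by the same allocation `x` (with new multipliers). -/
theorem stmt16 {S : Type*} [Fintype S] [Nonempty S] {n : ℕ} (hn : 0 < n)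
    (p : Fin n → S → ℝ) (hp : ∀ i, p i ∈ stdSimplex ℝ S)
    (ρ : S → ℝ) (hρ : ρ ∈ stdSimplex ℝ S)
    (x : Fin n → S → ℝ) (hx : ∀ i s, 0 ≤ x i s)
    (hclear : ∀ s, ∑ i, x i s = 1)
    (hbudget : ∀ i, ∑ s, ρ s * x i s = 1 / n)
    (α : Fin n → ℝ) (hα : ∀ i, 0 < α i)
    (hineq : ∀ i s, α i * p i s ≤ ρ s)
    (heq : ∀ i s, 0 < x i s → ρ s = α i * p i s)
    (lam : Fin n → ℝ) (hlam : ∀ i, lam i ∈ Set.Icc (0:ℝ) 1)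
    (q : Fin n → S → ℝ)
    (hqdef : ∀ i s, q i s = lam i * p i s + (1 - lam i) * ρ s) :
    ∃ α' : Fin n → ℝ, (∀ i, 0 < α' i) ∧
      (∀ i s, α' i * q i s ≤ ρ s) ∧
      (∀ i s, 0 < x i s → ρ s = α' i * q i s) := by
  have hd : ∀ i, 0 < lam i + (1 - lam i) * α i := by
    intro i
    obtain ⟨h0, h1⟩ := hlam i
    rcases eq_or_lt_of_le h0 with h | h
    · have : lam i = 0 := h.symm
      rw [this]; simpa using hα i
    · nlinarith [hα i]
  refine ⟨fun i => α i / (lam i + (1 - lam i) * α i), ?_, ?_, ?_⟩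
  · exact fun i => div_pos (hα i) (hd i)
  · intro i s
    obtain ⟨h0, h1⟩ := hlam i
    rw [hqdef i s, div_mul_eq_mul_div, div_le_iff₀ (hd i)]
    have h2 : lam i * (α i * p i s) ≤ lam i * ρ s :=
      mul_le_mul_of_nonneg_left (hineq i s) h0
    nlinarith [hρ.1 s]
  · intro i s hxs
    have he := heq i s hxs
    rw [hqdef i s, div_mul_eq_mul_div, eq_div_iff (hd i).ne', he]
    ring
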